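/- Let d ≥ 2, let k > 2 be an integer, and let ε ∈ [0,1). Let N_ε(ρ) = (1−ε)ρ + ε·tr(ρ)·I_d/d be the d-dimensional depolarizing channel, and let H_j = (S_j + S_j†)/2 be the moment observable on ℂ^{d^j}. Suppose that for each l with 2 ≤ l ≤ k−1 we are given: (i) a completely positive map C_l on d^l×d^l matrices and a real number t_l such that (1−ε)^{−l}·tr[H_l · C_l(N_ε(ρ)^{⊗l})] − t_l = tr[ρ^l] for every density matrix ρ on ℂ^d; and (ii) a completely positive map R_l on d^k×d^k matrices such that R_l(H_k) = −H_l ⊗ I_{d^{k−l}}/d^{k−l}. Define f_j = (1−ε)^{−j}, define the map C_k = id + Σ_{l=2}^{k−1} binom(k,l)·(1−ε)^l·ε^{k−l}·f_l · (R_l† ∘ (C_l ⊗ id)), where R_l† is the trace-pairing adjoint of R_l and C_l ⊗ id acts as C_l on the first l factors and the identity on the remaining k−l factors, and define t_k = f_k·[ ε^k/d^{k−1} + k(1−ε)ε^{k−1}/d^{k−1} − Σ_{l=2}^{k−1} binom(k,l)·(1−ε)^l·ε^{k−l}·d^{l−k}·t_l ]. Then for every density matrix ρ on ℂ^d, f_k·tr[H_k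 · C_k(N_ε(ρ)^{⊗k})] − t_k = tr[ρ^k]. (Inductive step of the recursive construction of the k-th moment retriever for depolarizing noise.) -/

import Mathlib

open Matrix BigOperators ComplexOrder

/-- The cyclic permutation operator `S_j` on `(ℂ^d)^{⊗j} ≅ ℂ^{d^j}`. -/
noncomputable def cyclicPermOp (d j : ℕ) : Matrix (Fin j → Fin d) (Fin j → Fin d) ℂ :=
  Matrix.of fun a b => if ∀ i, a i = b (finRotate j i) then 1 else 0

/-- The moment observable `H_j = (S_j + S_j†)/2`. -/
noncomputable def momentObs (d j : ℕ) : Matrix (Fin j → Fin d) (Fin j → Fin d) ℂ :=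
  (1 / 2 : ℂ) • (cyclicPermOp d j + (cyclicPermOp d j)ᴴ)

/-- The `j`-fold Kronecker power `ρ^{⊗j}`. -/
noncomputable def kronPow {d : ℕ} (ρ : Matrix (Fin d) (Fin d) ℂ) (j : ℕ) :
    Matrix (Fin j → Fin d) (Fin j → Fin d) ℂ :=
  Matrix.of fun a b => ∏ i, ρ (a i) (b i)

/-- The `d`-dimensional depolarizing channel `N_ε(ρ) = (1−ε)ρ + ε·tr(ρ)·I_d/d`. -/
noncomputable def NdepD (d : ℕ) (ε : ℝ) (ρ : Matrix (Fin d) (Fin d) ℂ) :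
    Matrix (Fin d) (Fin d) ℂ :=
  ((1 - ε : ℝ) : ℂ) • ρ + ((ε / d : ℝ) : ℂ) • ρ.trace • (1 : Matrix (Fin d) (Fin d) ℂ)

/-- A linear map on `n × n` complex matrices is completely positive if it admits a finite Kraus
representation `T(X) = Σᵢ AᵢXAᵢ†`. -/
def IsCP {n : Type*} [Fintype n] (T : Matrix n n ℂ →ₗ[ℂ] Matrix n n ℂ) : Prop :=
  ∃ (r : ℕ) (A : Fin r → Matrix n n ℂ), ∀ X, T X = ∑ i, A i * X * (A i)ᴴ

/-- First `l` tensor factors of an index of `(ℂ^d)^{⊗k}`. -/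
def splitL {d k l : ℕ} (h : l ≤ k) (a : Fin k → Fin d) : Fin l → Fin d :=
  fun i => a (Fin.castLE h i)

/-- Last `k − l` tensor factors of an index of `(ℂ^d)^{⊗k}`. -/
def splitR {d k l : ℕ} (h : l ≤ k) (a : Fin k → Fin d) : Fin (k - l) → Fin d :=
  fun i => a (Fin.cast (Nat.add_sub_cancel' h) (Fin.natAdd l i))

/-- The Kronecker product `A ⊗ B` of a `d^l × d^l` matrix with a `d^{k−l} × d^{k−l}` matrix,
viewed as a `d^k × d^k` matrix. -/
noncomputable def kronJoin {d k l : ℕ} (h : l ≤ k)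
    (A : Matrix (Fin l → Fin d) (Fin l → Fin d) ℂ)
    (B : Matrix (Fin (k - l) → Fin d) (Fin (k - l) → Fin d) ℂ) :
    Matrix (Fin k → Fin d) (Fin k → Fin d) ℂ :=
  Matrix.of fun a b => A (splitL h a) (splitL h b) * B (splitR h a) (splitR h b)



lemma path_sum {d : ℕ} (X : Matrix (Fin d) (Fin d) ℂ) :
    ∀ (j : ℕ) (x : Fin d) (f : Fin d → ℂ),
    ∑ c : Fin j → Fin d,
        (∏ i : Fin j, X ((Fin.cons x c : Fin (j+1) → Fin d) i.castSucc) (c i)) *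
          f ((Fin.cons x c : Fin (j+1) → Fin d) (Fin.last j))
      = ∑ y, (X ^ j) x y * f y := by
  intro j
  induction j with
  | zero =>
    intro x f
    simp [Matrix.one_apply]
  | succ j ih =>
    intro x f
    rw [← (Fin.consEquiv (fun _ : Fin (j+1) => Fin d)).sum_comp]
    rw [Fintype.sum_prod_type]
    have key : ∀ z : Fin d, ∀ c : Fin j → Fin d,
        (∏ i : Fin (j+1), X ((Fin.cons x ((Fin.consEquiv _) (z, c)) : Fin (j+2) → Fin d) i.castSucc)
            (((Fin.consEquiv (fun _ : Fin (j+1) => Fin d)) (z, c)) i)) *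
          f ((Fin.cons x ((Fin.consEquiv _) (z, c)) : Fin (j+2) → Fin d) (Fin.last (j+1)))
        = X x z * ((∏ i : Fin j, X ((Fin.cons z c : Fin (j+1) → Fin d) i.castSucc) (c i)) *
            f ((Fin.cons z c : Fin (j+1) → Fin d) (Fin.last j))) := by
      intro z c
      have h1 : (Fin.consEquiv (fun _ : Fin (j+1) => Fin d)) (z, c) = Fin.cons z c := rfl
      rw [h1, Fin.prod_univ_succ]
      have h2 : ∀ i : Fin j, (Fin.cons x (Fin.cons z c) : Fin (j+2) → Fin d) (i.succ.castSucc)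
          = (Fin.cons z c : Fin (j+1) → Fin d) i.castSucc := by
        intro i
        rw [← Fin.succ_castSucc, Fin.cons_succ]
      have h3 : (Fin.cons x (Fin.cons z c) : Fin (j+2) → Fin d) (Fin.last (j+1))
          = (Fin.cons z c : Fin (j+1) → Fin d) (Fin.last j) := by
        rw [← Fin.succ_last, Fin.cons_succ]
      simp only [Fin.cons_succ, Fin.castSucc_zero, Fin.cons_zero, h3]
      rw [Finset.prod_congr rfl (fun i _ => by rw [h2 i])]
      ring
    simp only [key]
    have hz : ∀ z : Fin d, ∑ c : Fin j → Fin d,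
        X x z * ((∏ i : Fin j, X ((Fin.cons z c : Fin (j+1) → Fin d) i.castSucc) (c i)) *
          f ((Fin.cons z c : Fin (j+1) → Fin d) (Fin.last j)))
        = X x z * ∑ y, (X ^ j) z y * f y := by
      intro z; rw [← Finset.mul_sum, ih z f]
    rw [Finset.sum_congr rfl (fun z _ => hz z)]
    simp only [Finset.mul_sum]
    rw [Finset.sum_comm]
    refine Finset.sum_congr rfl fun y _ => ?_
    rw [pow_succ' X j, Matrix.mul_apply, Finset.sum_mul]
    exact Finset.sum_congr rfl fun z _ => by ring

lemma cyclic_sum_eq {d : ℕ} (X : Matrix (Fin d) (Fin d) ℂ) (m : ℕ) :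
    ∑ a : Fin (m+1) → Fin d, ∏ i : Fin (m+1), X (a i) (a (finRotate (m+1) i))
      = (X ^ (m+1)).trace := by
  rw [← (Fin.consEquiv (fun _ : Fin (m+1) => Fin d)).sum_comp, Fintype.sum_prod_type]
  have key : ∀ (x : Fin d) (c : Fin m → Fin d),
      (∏ i : Fin (m+1), X ((Fin.cons x c : Fin (m+1) → Fin d) i)
        ((Fin.cons x c : Fin (m+1) → Fin d) (finRotate (m+1) i)))
      = (∏ i : Fin m, X ((Fin.cons x c : Fin (m+1) → Fin d) i.castSucc) (c i)) *
          X ((Fin.cons x c : Fin (m+1) → Fin d) (Fin.last m)) x := by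
    intro x c
    rw [Fin.prod_univ_castSucc]
    congr 1
    · refine Finset.prod_congr rfl fun i _ => ?_
      have h1 : finRotate (m+1) i.castSucc = i.succ := by
        rw [finRotate_succ_apply]
        ext
        rw [Fin.val_add_one_of_lt (Fin.castSucc_lt_last i)]
        simp
      rw [h1, Fin.cons_succ]
    · rw [finRotate_last, Fin.cons_zero]
  have step : ∀ x : Fin d, ∑ c : Fin m → Fin d,
      ∏ i : Fin (m+1), X (((Fin.consEquiv fun _ : Fin (m+1) => Fin d) (x, c)) i)
        (((Fin.consEquiv fun _ : Fin (m+1) => Fin d) (x, c)) (finRotate (m+1) i))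
      = ∑ y, (X ^ m) x y * X y x := by
    intro x
    have h1 : ∀ c : Fin m → Fin d, (Fin.consEquiv fun _ : Fin (m+1) => Fin d) (x, c) = Fin.cons x c :=
      fun c => rfl
    simp only [h1, key]
    exact path_sum X m x (fun y => X y x)
  rw [Finset.sum_congr rfl fun x _ => step x]
  rw [Matrix.trace, pow_succ]
  refine Finset.sum_congr rfl fun x _ => ?_
  rw [Matrix.diag_apply, Matrix.mul_apply]

lemma trace_S_mul {d : ℕ} (m : ℕ) (X : Matrix (Fin d) (Fin d) ℂ) :
    (cyclicPermOp d (m+1) * kronPow X (m+1)).trace = (X ^ (m+1)).trace := by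
  rw [← cyclic_sum_eq X m, Matrix.trace]
  simp only [Matrix.diag_apply, Matrix.mul_apply, cyclicPermOp, kronPow, Matrix.of_apply]
  rw [Finset.sum_comm]
  refine Finset.sum_congr rfl fun b _ => ?_
  have : ∀ a : Fin (m+1) → Fin d,
      (if ∀ i, a i = b (finRotate (m+1) i) then (1:ℂ) else 0) * ∏ i, X (b i) (a i)
      = if a = (fun i => b (finRotate (m+1) i)) then ∏ i, X (b i) (a i) else 0 := by
    intro a
    by_cases h : a = fun i => b (finRotate (m+1) i)
    · simp [h, fun i => congrFun h i]
    · have h2 : ¬ ∀ i, a i = b (finRotate (m+1) i) := fun hh => h (funext hh)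
      rw [if_neg h2, if_neg h, zero_mul]
  simp only [this]
  rw [Finset.sum_ite_eq' Finset.univ]
  simp

lemma trace_Sh_mul {d : ℕ} (m : ℕ) (X : Matrix (Fin d) (Fin d) ℂ) :
    ((cyclicPermOp d (m+1))ᴴ * kronPow X (m+1)).trace = (X ^ (m+1)).trace := by
  have h := cyclic_sum_eq Xᵀ m
  rw [← Matrix.trace_transpose (X ^ (m+1)), Matrix.transpose_pow, ← h, Matrix.trace]
  simp only [Matrix.diag_apply, Matrix.mul_apply, cyclicPermOp, kronPow,
    Matrix.conjTranspose_apply, Matrix.of_apply, Matrix.transpose_apply]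
  refine Finset.sum_congr rfl fun a _ => ?_
  have : ∀ b : Fin (m+1) → Fin d,
      star (if ∀ i, b i = a (finRotate (m+1) i) then (1:ℂ) else 0) * ∏ i, X (b i) (a i)
      = if b = (fun i => a (finRotate (m+1) i)) then ∏ i, X (b i) (a i) else 0 := by
    intro b
    by_cases h : b = fun i => a (finRotate (m+1) i)
    · simp [h, fun i => congrFun h i]
    · have h2 : ¬ ∀ i, b i = a (finRotate (m+1) i) := fun hh => h (funext hh)
      rw [if_neg h2, if_neg h]
      simp
  simp only [this]
  rw [Finset.sum_ite_eq' Finset.univ]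
  simp

lemma trace_momentObs_mul {d : ℕ} (m : ℕ) (X : Matrix (Fin d) (Fin d) ℂ) :
    (momentObs d (m+1) * kronPow X (m+1)).trace = (X ^ (m+1)).trace := by
  rw [momentObs, Matrix.smul_mul, Matrix.add_mul, Matrix.trace_smul, Matrix.trace_add,
    trace_S_mul, trace_Sh_mul, smul_eq_mul]
  ring

def idxEquiv (k l : ℕ) (h : l ≤ k) : Fin l ⊕ Fin (k - l) ≃ Fin k :=
  finSumFinEquiv.trans (finCongr (Nat.add_sub_cancel' h))

lemma idxEquiv_inl {k l : ℕ} (h : l ≤ k) (i : Fin l) :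
    idxEquiv k l h (Sum.inl i) = Fin.castLE h i := by
  ext; simp [idxEquiv]

lemma idxEquiv_inr {k l : ℕ} (h : l ≤ k) (i : Fin (k - l)) :
    idxEquiv k l h (Sum.inr i) = Fin.cast (Nat.add_sub_cancel' h) (Fin.natAdd l i) := by
  ext; simp [idxEquiv]

lemma prod_split {d k l : ℕ} (h : l ≤ k) (f : Fin k → Fin d → Fin d → ℂ)
    (a b : Fin k → Fin d) :
    ∏ i : Fin k, f i (a i) (b i)
      = (∏ i : Fin l, f (Fin.castLE h i) (splitL h a i) (splitL h b i)) *
        ∏ i : Fin (k - l), f (Fin.cast (Nat.add_sub_cancel' h) (Fin.natAdd l i))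
          (splitR h a i) (splitR h b i) := by
  rw [← Equiv.prod_comp (idxEquiv k l h) (fun i => f i (a i) (b i)), Fintype.prod_sum_type]
  simp only [idxEquiv_inl, idxEquiv_inr, splitL, splitR]

lemma kronPow_split {d k l : ℕ} (h : l ≤ k) (X : Matrix (Fin d) (Fin d) ℂ) :
    kronPow X k = kronJoin h (kronPow X l) (kronPow X (k - l)) := by
  ext a b
  exact prod_split h (fun _ x y => X x y) a b

lemma sum_split {d k l : ℕ} (h : l ≤ k) (F : (Fin l → Fin d) → (Fin (k - l) → Fin d) → ℂ) :
    ∑ c : Fin k → Fin d, F (splitL h c) (splitR h c) = ∑ c1, ∑ c2, F c1 c2 := by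
  classical
  have := Fintype.sum_bijective
    (fun c : Fin k → Fin d => ((splitL h c, splitR h c) : (Fin l → Fin d) × (Fin (k-l) → Fin d)))
    ?_ _ (fun p => F p.1 p.2) (fun c => rfl)
  · rw [this, Fintype.sum_prod_type]
  · have : (fun c : Fin k → Fin d => ((splitL h c, splitR h c))) =
        fun c => (fun i => c (idxEquiv k l h (Sum.inl i)), fun i => c (idxEquiv k l h (Sum.inr i))) := by
      funext c
      simp only [idxEquiv_inl, idxEquiv_inr]
      exact Prod.ext rfl rfl
    rw [this]
    exact (((idxEquiv k l h).symm.arrowCongr (Equiv.refl (Fin d))).trans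
      (Equiv.sumArrowEquivProdArrow _ _ _)).bijective
  
lemma kronJoin_mul {d k l : ℕ} (h : l ≤ k)
    (A A' : Matrix (Fin l → Fin d) (Fin l → Fin d) ℂ)
    (B B' : Matrix (Fin (k - l) → Fin d) (Fin (k - l) → Fin d) ℂ) :
    kronJoin h A B * kronJoin h A' B' = kronJoin h (A * A') (B * B') := by
  ext a b
  simp only [kronJoin, Matrix.mul_apply, Matrix.of_apply]
  rw [sum_split h (fun c1 c2 => (A (splitL h a) c1 * B (splitR h a) c2) *
    (A' c1 (splitL h b) * B' c2 (splitR h b)))]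
  rw [Finset.sum_mul_sum]
  exact Finset.sum_congr rfl fun c1 _ => Finset.sum_congr rfl fun c2 _ => by ring

lemma kronJoin_trace {d k l : ℕ} (h : l ≤ k)
    (A : Matrix (Fin l → Fin d) (Fin l → Fin d) ℂ)
    (B : Matrix (Fin (k - l) → Fin d) (Fin (k - l) → Fin d) ℂ) :
    (kronJoin h A B).trace = A.trace * B.trace := by
  simp only [Matrix.trace, Matrix.diag_apply, kronJoin, Matrix.of_apply]
  rw [sum_split h (fun c1 c2 => A c1 c1 * B c2 c2), Finset.sum_mul_sum]

lemma trace_kronPow {d j : ℕ} (X : Matrix (Fin d) (Fin d) ℂ) :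
    (kronPow X j).trace = X.trace ^ j := by
  simp only [Matrix.trace, Matrix.diag_apply, kronPow, Matrix.of_apply]
  rw [Fintype.sum_pow]

/-- inductive step of the recursive construction of the `k`-th moment retriever
for depolarizing noise.  Given, for each `2 ≤ l ≤ k−1`, a CP map `C l` and a real `t l`
retrieving the `l`-th moment with overhead `(1−ε)^{−l}`, and a CP map `R l` with
`R l (H_k) = −H_l ⊗ I/d^{k−l}` (with `Radj l` the trace-pairing adjoint of `R l` and `ClId l`
the map `C l ⊗ id`), the map
`C_k = id + Σ_l binom(k,l)(1−ε)^l ε^{k−l} f_l (R_l† ∘ (C_l ⊗ id))` together with the stated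
`t_k` retrieves the `k`-th moment: `f_k·tr[H_k · C_k(N_ε(ρ)^{⊗k})] − t_k = tr[ρ^k]`. -/
theorem kth_moment_retriever_inductive_step (d k : ℕ) (hd : 2 ≤ d) (hk : 2 < k)
    (ε : ℝ) (hε : 0 ≤ ε) (hε1 : ε < 1)
    (C : ∀ l : ℕ, Matrix (Fin l → Fin d) (Fin l → Fin d) ℂ →ₗ[ℂ]
      Matrix (Fin l → Fin d) (Fin l → Fin d) ℂ)
    (t : ℕ → ℝ)
    (R Radj ClId : ℕ → (Matrix (Fin k → Fin d) (Fin k → Fin d) ℂ →ₗ[ℂ]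
      Matrix (Fin k → Fin d) (Fin k → Fin d) ℂ))
    (hC_CP : ∀ l, 2 ≤ l → l ≤ k - 1 → IsCP (C l))
    (hret : ∀ l, 2 ≤ l → l ≤ k - 1 →
      ∀ ρ : Matrix (Fin d) (Fin d) ℂ, ρ.PosSemidef → ρ.trace = 1 →
        ((((1 - ε) ^ l)⁻¹ : ℝ) : ℂ) * (momentObs d l * C l (kronPow (NdepD d ε ρ) l)).trace
            - ((t l : ℝ) : ℂ)
          = (ρ ^ l).trace)
    (hR_CP : ∀ l, 2 ≤ l → l ≤ k - 1 → IsCP (R l))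
    (hR : ∀ l (hl : 2 ≤ l) (hl' : l ≤ k - 1),
      R l (momentObs d k)
        = -(kronJoin (show l ≤ k by omega) (momentObs d l)
            ((((d : ℂ) ^ (k - l))⁻¹) • (1 : Matrix (Fin (k - l) → Fin d) (Fin (k - l) → Fin d) ℂ))))
    (hRadj : ∀ l, 2 ≤ l → l ≤ k - 1 → ∀ A B, (R l A * B).trace = (A * Radj l B).trace)
    (hClId : ∀ l (hl : 2 ≤ l) (hl' : l ≤ k - 1)
      (A : Matrix (Fin l → Fin d) (Fin l → Fin d) ℂ)
      (B : Matrix (Fin (k - l) → Fin d) (Fin (k - l) → Fin d) ℂ),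
      ClId l (kronJoin (show l ≤ k by omega) A B) = kronJoin (show l ≤ k by omega) (C l A) B)
    (ρ : Matrix (Fin d) (Fin d) ℂ) (hρ : ρ.PosSemidef) (hρ1 : ρ.trace = 1) :
    ((((1 - ε) ^ k)⁻¹ : ℝ) : ℂ) *
        (momentObs d k *
          (((LinearMap.id + ∑ l ∈ Finset.Icc 2 (k - 1),
              (((k.choose l : ℝ) * (1 - ε) ^ l * ε ^ (k - l) * ((1 - ε) ^ l)⁻¹ : ℝ) : ℂ) •
                (Radj l ∘ₗ ClId l)) :
              Matrix (Fin k → Fin d) (Fin k → Fin d) ℂ →ₗ[ℂ]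
                Matrix (Fin k → Fin d) (Fin k → Fin d) ℂ)
            (kronPow (NdepD d ε ρ) k))).trace
      - ((((1 - ε) ^ k)⁻¹ *
          (ε ^ k / (d : ℝ) ^ (k - 1) + (k : ℝ) * (1 - ε) * ε ^ (k - 1) / (d : ℝ) ^ (k - 1)
            - ∑ l ∈ Finset.Icc 2 (k - 1),
                (k.choose l : ℝ) * (1 - ε) ^ l * ε ^ (k - l) * ((d : ℝ) ^ (k - l))⁻¹ * t l) : ℝ) : ℂ)
      = (ρ ^ k).trace := by
  obtain ⟨K, rfl⟩ : ∃ K, k = K + 1 := ⟨k - 1, by omega⟩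
  simp only [Nat.add_sub_cancel] at hret hR hRadj hClId ⊢
  have hK : 2 ≤ K := by omega
  set N := NdepD d ε ρ with hNdef
  have hu : (1 - (ε:ℂ)) ≠ 0 := by
    intro h
    rw [sub_eq_zero] at h
    have : (1:ℝ) = ε := by exact_mod_cast h
    linarith
  have hDC : ((d : ℂ)) ≠ 0 := Nat.cast_ne_zero.mpr (by omega)
  have hNform2 : N = (1 - (ε:ℂ)) • ρ + ((ε:ℂ)/(d:ℂ)) • (1 : Matrix (Fin d) (Fin d) ℂ) := by
    rw [hNdef, NdepD, hρ1, one_smul]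
    norm_cast
  have hNtr : N.trace = 1 := by
    rw [hNform2, Matrix.trace_add, Matrix.trace_smul, Matrix.trace_smul, hρ1, Matrix.trace_one]
    simp only [Fintype.card_fin, smul_eq_mul, mul_one]
    field_simp
    ring
  -- per-l value of the correction trace
  have hterm : ∀ l ∈ Finset.Icc 2 K,
      (momentObs d (K+1) * (Radj l ((ClId l) (kronPow N (K+1))))).trace
      = -(((d : ℂ) ^ (K+1 - l))⁻¹ * ((1 - (ε:ℂ)) ^ l * ((ρ ^ l).trace + ((t l : ℝ) : ℂ)))) := by
    intro l hl
    rw [Finset.mem_Icc] at hl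
    obtain ⟨hl2, hl1⟩ := hl
    have hlk : l ≤ K + 1 := by omega
    have e1 : ClId l (kronPow N (K+1))
        = kronJoin hlk (C l (kronPow N l)) (kronPow N (K+1-l)) := by
      rw [kronPow_split hlk N]
      exact hClId l hl2 hl1 _ _
    have hCl : (momentObs d l * C l (kronPow N l)).trace
        = (1 - (ε:ℂ)) ^ l * ((ρ ^ l).trace + ((t l : ℝ) : ℂ)) := by
      have h := hret l hl2 hl1 ρ hρ hρ1
      have hul : (1 - (ε:ℂ)) ^ l ≠ 0 := pow_ne_zero _ hu
      push_cast at h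
      field_simp at h
      linear_combination h
    rw [e1, ← hRadj l hl2 hl1, hR l hl2 hl1, Matrix.neg_mul, Matrix.trace_neg,
      kronJoin_mul, Matrix.smul_mul, one_mul, kronJoin_trace, Matrix.trace_smul,
      trace_kronPow, hNtr, one_pow, hCl, smul_eq_mul, mul_one]
    ring
  -- expand the linear map application
  have expand :
      (momentObs d (K+1) * ((LinearMap.id + ∑ l ∈ Finset.Icc 2 K,
          ((((K+1).choose l : ℝ) * (1 - ε) ^ l * ε ^ (K+1 - l) * ((1 - ε) ^ l)⁻¹ : ℝ) : ℂ) •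
            (Radj l ∘ₗ ClId l) :
            Matrix (Fin (K+1) → Fin d) (Fin (K+1) → Fin d) ℂ →ₗ[ℂ]
              Matrix (Fin (K+1) → Fin d) (Fin (K+1) → Fin d) ℂ) (kronPow N (K+1)))).trace
      = (N ^ (K+1)).trace + ∑ l ∈ Finset.Icc 2 K,
          ((((K+1).choose l : ℝ) * (1 - ε) ^ l * ε ^ (K+1 - l) * ((1 - ε) ^ l)⁻¹ : ℝ) : ℂ) *
            -(((d : ℂ) ^ (K+1 - l))⁻¹ * ((1 - (ε:ℂ)) ^ l * ((ρ ^ l).trace + ((t l : ℝ) : ℂ)))) := by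
    simp only [LinearMap.add_apply, LinearMap.id_apply, LinearMap.sum_apply,
      LinearMap.smul_apply, LinearMap.coe_comp, Function.comp_apply]
    rw [Matrix.mul_add, Matrix.trace_add, trace_momentObs_mul]
    congr 1
    rw [Finset.mul_sum, Matrix.trace_sum]
    exact Finset.sum_congr rfl fun l hl => by
      rw [Matrix.mul_smul, Matrix.trace_smul, smul_eq_mul, hterm l hl]
  -- binomial expansion of (N^(K+1)).trace
  have hNk : (N ^ (K+1)).trace = ∑ j ∈ Finset.range (K+2),
      (((K+1).choose j : ℂ)) * (1 - (ε:ℂ)) ^ j * ((ε:ℂ)/(d:ℂ)) ^ (K+1-j) * (ρ ^ j).trace := by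
    rw [hNform2]
    have hcomm : Commute ((1 - (ε:ℂ)) • ρ) (((ε:ℂ)/(d:ℂ)) • (1 : Matrix (Fin d) (Fin d) ℂ)) :=
      Commute.smul_left (Commute.smul_right (Commute.one_right ρ) _) _
    rw [hcomm.add_pow, Matrix.trace_sum]
    refine Finset.sum_congr rfl fun j hj => ?_
    rw [smul_pow, smul_pow, one_pow]
    simp only [Matrix.smul_mul, Matrix.mul_smul, Matrix.mul_one, Matrix.trace_smul, smul_eq_mul]
    rw [← (Nat.cast_commute ((K+1).choose j) (ρ^j)).eq, ← nsmul_eq_mul,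
      ← Nat.cast_smul_eq_nsmul ℂ, Matrix.trace_smul, smul_eq_mul]
    ring
  -- the key cancellation between the binomial middle terms and the corrections
  have hS : (∑ l ∈ Finset.Icc 2 K,
        (((K+1).choose l : ℂ)) * (1 - (ε:ℂ)) ^ l * ((ε:ℂ)/(d:ℂ)) ^ (K+1-l) * (ρ ^ l).trace)
      + (∑ l ∈ Finset.Icc 2 K,
          ((((K+1).choose l : ℝ) * (1 - ε) ^ l * ε ^ (K+1 - l) * ((1 - ε) ^ l)⁻¹ : ℝ) : ℂ) *
            -(((d : ℂ) ^ (K+1 - l))⁻¹ * ((1 - (ε:ℂ)) ^ l * ((ρ ^ l).trace + ((t l : ℝ) : ℂ)))))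
      = -∑ l ∈ Finset.Icc 2 K,
          ((((K+1).choose l : ℝ) * (1 - ε) ^ l * ε ^ (K+1 - l) * ((d:ℝ) ^ (K+1 - l))⁻¹ * t l : ℝ) : ℂ) := by
    rw [← Finset.sum_add_distrib, ← Finset.sum_neg_distrib]
    refine Finset.sum_congr rfl fun l hl => ?_
    rw [Finset.mem_Icc] at hl
    have hul : (1 - (ε:ℂ)) ^ l ≠ 0 := pow_ne_zero _ hu
    have hDl : ((d:ℂ)) ^ (K+1-l) ≠ 0 := pow_ne_zero _ hDC
    push_cast
    field_simp
    have hdd' : ((d:ℂ)) ^ (K+1-l) * ((d:ℂ)⁻¹) ^ (K+1-l) = 1 := by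
      rw [← mul_pow, mul_inv_cancel₀ hDC, one_pow]
    linear_combination (((K+1).choose l : ℂ) * (ε:ℂ) ^ (K+1-l) * (ρ ^ l).trace) * hdd'
  rw [expand, hNk]
  have h0 : (0:ℕ) ∉ insert 1 (insert (K+1) (Finset.Icc 2 K)) := by
    simp [Finset.mem_Icc]
  have h1 : (1:ℕ) ∉ insert (K+1) (Finset.Icc 2 K) := by
    simp [Finset.mem_Icc]
    omega
  have hK1 : K+1 ∉ Finset.Icc 2 K := by
    simp [Finset.mem_Icc]
  have hrange : Finset.range (K+2) = insert 0 (insert 1 (insert (K+1) (Finset.Icc 2 K))) := by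
    ext x
    simp only [Finset.mem_range, Finset.mem_insert, Finset.mem_Icc]
    omega
  rw [hrange, Finset.sum_insert h0, Finset.sum_insert h1, Finset.sum_insert hK1]
  simp only [Nat.choose_zero_right, Nat.cast_one, pow_zero, one_mul, Nat.sub_zero,
    Nat.choose_one_right, pow_one, Nat.add_sub_cancel, Nat.choose_self, Nat.sub_self,
    mul_one, Matrix.trace_one, Fintype.card_fin, hρ1]
  have hfu : ((1 - (ε:ℂ)) ^ (K+1))⁻¹ * (1 - (ε:ℂ)) ^ (K+1) = 1 :=
    inv_mul_cancel₀ (pow_ne_zero _ hu)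
  have hdd : ((d:ℂ))⁻¹ * (d:ℂ) = 1 := inv_mul_cancel₀ hDC
  have cA : (↑(((1 - ε) ^ (K+1))⁻¹) : ℂ) = ((1 - (ε:ℂ)) ^ (K+1))⁻¹ := by push_cast; ring
  have cB1 : (↑(ε ^ (K+1) / (d:ℝ) ^ K) : ℂ) = (ε:ℂ) ^ (K+1) / (d:ℂ) ^ K := by push_cast; ring
  have cB2 : (↑((↑(K+1) : ℝ) * (1 - ε) * ε ^ K / (d:ℝ) ^ K) : ℂ)
      = ((K+1 : ℕ) : ℂ) * (1 - (ε:ℂ)) * (ε:ℂ) ^ K / (d:ℂ) ^ K := by push_cast; ring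
  rw [Complex.ofReal_mul, Complex.ofReal_sub, Complex.ofReal_add, Complex.ofReal_sum,
    cA, cB1, cB2]
  linear_combination ((1 - (ε:ℂ)) ^ (K+1))⁻¹ * hS + (ρ ^ (K+1)).trace * hfu
    + (((1 - (ε:ℂ)) ^ (K+1))⁻¹ * (ε:ℂ)^(K+1) * (((d:ℂ))⁻¹)^K) * hdd
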